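/- Let 0 < q < 1 and α > 0 be real, w complex with |w| < 1, d an odd positive integer, χ : ℤ → ℂ with period d, and s complex. Define L(s | χ) := (1+q) Σ_{m=1}^∞ (-1)^m χ(m) w^m [m]_{q^α}^{-s} and ζ̃_{q^d}^{(α, w^d)}(s, y) := (1+q^d) Σ_{m=0}^∞ (-1)^m w^{dm} [m+y]_{q^{dα}}^{-s}. Then L(s | χ) = ((1+q)/(1+q^d)) · [d]_{q^α}^{-s} · Σ_{a=0}^{d-1} (-1)^a χ(a) w^a · ζ̃_{q^d}^{(α, w^d)}(s, a/d), where the a = 0 term of the Hurwitz zeta omits m = 0. -/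

import Mathlib

/-- The weighted q-bracket `[y]_{q^α} = (1 - q^{αy})/(1 - q^α)`. -/
noncomputable def qbr (q α y : ℝ) : ℝ := (1 - q ^ (α * y)) / (1 - q ^ α)

/-- The twisted q-Hurwitz zeta function
`ζ̃_{q^d}^{(α,w^d)}(s,y) = (1+q^d) Σ_{m≥0} (-1)^m w^{dm} [m+y]_{q^{dα}}^{-s}`,
where for `a = 0` (i.e. `y = 0`) the `m = 0` term is omitted. -/
noncomputable def ZetaTw (q α : ℝ) (d : ℕ) (w : ℂ) (s : ℂ) (y : ℝ) : ℂ :=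
  (1 + (q : ℂ) ^ d) *
    ∑' m : ℕ, (-1 : ℂ) ^ m * w ^ (d * m) * ((qbr q ((d : ℝ) * α) ((m : ℝ) + y) : ℝ) : ℂ) ^ (-s)

section Aux

variable {q α : ℝ}

lemma qpow_lt_one (hq0 : 0 < q) (hq1 : q < 1) {β : ℝ} (hβ : 0 < β) : q ^ β < 1 :=
  Real.rpow_lt_one hq0.le hq1 hβ

lemma one_sub_qpow_pos (hq0 : 0 < q) (hq1 : q < 1) {β : ℝ} (hβ : 0 < β) : 0 < 1 - q ^ β :=
  sub_pos.mpr (qpow_lt_one hq0 hq1 hβ)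

lemma qbr_pos (hq0 : 0 < q) (hq1 : q < 1) {β y : ℝ} (hβ : 0 < β) (hy : 0 < y) :
    0 < qbr q β y :=
  div_pos (one_sub_qpow_pos hq0 hq1 (by positivity)) (one_sub_qpow_pos hq0 hq1 hβ)

lemma qbr_scale (hq0 : 0 < q) (hq1 : q < 1) {β : ℝ} (hβ : 0 < β) {c : ℝ} (hc : 0 < c) (u : ℝ) :
    qbr q β (c * u) = qbr q β c * qbr q (c * β) u := by
  unfold qbr
  have h1 : (1 : ℝ) - q ^ β ≠ 0 := (one_sub_qpow_pos hq0 hq1 hβ).ne'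
  have h2 : (1 : ℝ) - q ^ (c * β) ≠ 0 :=
    (one_sub_qpow_pos hq0 hq1 (by positivity)).ne'
  have e1 : q ^ (c * β * u) = q ^ (β * (c * u)) := by ring_nf
  have e2 : q ^ (β * c) = q ^ (c * β) := by rw [mul_comm]
  rw [e1, e2]
  field_simp
  rw [mul_div_assoc, div_self (by rwa [e2]), mul_one]

/-- one ≤ qbr for arguments ≥ 1 -/
lemma one_le_qbr (hq0 : 0 < q) (hq1 : q < 1) {β y : ℝ} (hβ : 0 < β) (hy : 1 ≤ y) :
    1 ≤ qbr q β y := by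
  have h1 : q ^ (β * y) ≤ q ^ β :=
    Real.rpow_le_rpow_of_exponent_ge hq0 hq1.le (by nlinarith)
  have hb := one_sub_qpow_pos hq0 hq1 hβ
  rw [qbr, le_div_iff₀ hb]
  linarith

lemma qbr_le (hq0 : 0 < q) (hq1 : q < 1) {β y : ℝ} (hβ : 0 < β) :
    qbr q β y ≤ (1 - q ^ β)⁻¹ := by
  have hb := one_sub_qpow_pos hq0 hq1 hβ
  have h1 : (0 : ℝ) ≤ q ^ (β * y) := Real.rpow_nonneg hq0.le _
  rw [qbr, div_le_iff₀ hb, inv_mul_cancel₀ hb.ne']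
  linarith

end Aux

theorem twisted_qEuler_L_decomposition (q α : ℝ) (hq0 : 0 < q) (hq1 : q < 1) (hα : 0 < α)
    (w : ℂ) (hw : ‖w‖ < 1) (d : ℕ) (hd : Odd d) (hd0 : 0 < d)
    (χ : ℤ → ℂ) (hχ : ∀ j : ℤ, χ (j + d) = χ j) (s : ℂ) :
    (1 + (q : ℂ)) *
        ∑' m : ℕ, (-1 : ℂ) ^ (m + 1) * χ (m + 1) * w ^ (m + 1) *
          ((qbr q α ((m : ℝ) + 1) : ℝ) : ℂ) ^ (-s)
      = ((1 + (q : ℂ)) / (1 + (q : ℂ) ^ d)) * ((qbr q α d : ℝ) : ℂ) ^ (-s) *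
          (χ 0 *
              ((1 + (q : ℂ) ^ d) *
                ∑' m : ℕ, (-1 : ℂ) ^ (m + 1) * w ^ (d * (m + 1)) *
                  ((qbr q ((d : ℝ) * α) ((m : ℝ) + 1) : ℝ) : ℂ) ^ (-s))
            + ∑ a ∈ Finset.Ico 1 d,
                (-1 : ℂ) ^ a * χ a * w ^ a * ZetaTw q α d w s ((a : ℝ) / d)) := by
  classical
  have hdR : (0 : ℝ) < d := Nat.cast_pos.mpr hd0
  -- the master sequence
  set f : ℕ → ℂ := fun n =>
    if n = 0 then 0 else
      (-1) ^ n * χ n * w ^ n * ((qbr q α (n : ℝ) : ℝ) : ℂ) ^ (-s) with hf_def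
  -- periodicity of χ by natural multiples of d
  have hχper : ∀ (k : ℕ) (j : ℤ), χ (j + d * k) = χ j := by
    intro k
    induction k with
    | zero => intro j; simp
    | succ k ih =>
      intro j
      have : j + d * (k + 1 : ℕ) = (j + d * k) + d := by push_cast; ring
      rw [this, hχ, ih]
  -- summability of f
  have hsum : Summable f := by
    set B : ℝ := (1 - q ^ α)⁻¹ with hB
    set M : ℝ := max 1 (B ^ (-s.re)) with hM
    have hM1 : (1 : ℝ) ≤ M := le_max_left _ _
    set K : ℝ := ∑ a ∈ Finset.range d, ‖χ a‖ with hK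
    have hK0 : 0 ≤ K := Finset.sum_nonneg fun _ _ => norm_nonneg _
    have hbound : ∀ n : ℕ, ‖f n‖ ≤ K * M * ‖w‖ ^ n := by
      intro n
      rcases Nat.eq_zero_or_pos n with h0 | h1
      · subst h0; simp [hf_def]; positivity
      · have hn1 : (1 : ℝ) ≤ (n : ℝ) := by exact_mod_cast h1
        have hqbrpos : 0 < qbr q α n := qbr_pos hq0 hq1 hα (by linarith)
        have hnorm_cpow : ‖((qbr q α (n : ℝ) : ℝ) : ℂ) ^ (-s)‖ ≤ M := by
          rw [Complex.norm_cpow_eq_rpow_re_of_pos hqbrpos]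
          rcases le_or_gt 0 (-s).re with hre | hre
          · calc qbr q α n ^ (-s).re ≤ B ^ (-s).re :=
                  Real.rpow_le_rpow hqbrpos.le (qbr_le hq0 hq1 hα) hre
              _ ≤ M := by
                  simp only [hM, Complex.neg_re]; exact le_max_right _ _
          · calc qbr q α n ^ (-s).re ≤ 1 :=
                  Real.rpow_le_one_of_one_le_of_nonpos
                    (one_le_qbr hq0 hq1 hα hn1) hre.le
              _ ≤ M := hM1
        have hχn : ‖χ n‖ ≤ K := by
          have hmod : χ (n : ℤ) = χ ((n % d : ℕ) : ℤ) := by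
            conv_lhs => rw [show (n : ℤ) = ((n % d : ℕ) : ℤ) + d * ((n / d : ℕ) : ℤ) by
              push_cast; exact (Int.emod_add_mul_ediv _ _).symm]
            exact hχper _ _
          rw [hmod, hK]
          exact Finset.single_le_sum (f := fun a : ℕ => ‖χ (a : ℤ)‖)
            (fun a _ => norm_nonneg (χ (a : ℤ)))
            (Finset.mem_range.mpr (Nat.mod_lt n hd0))
        have : f n = (-1) ^ n * χ n * w ^ n * ((qbr q α (n : ℝ) : ℝ) : ℂ) ^ (-s) := by
          simp [hf_def, Nat.pos_iff_ne_zero.mp h1]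
        rw [this]
        calc ‖(-1 : ℂ) ^ n * χ n * w ^ n * ((qbr q α (n : ℝ) : ℝ) : ℂ) ^ (-s)‖
            = ‖χ n‖ * ‖w‖ ^ n * ‖((qbr q α (n : ℝ) : ℝ) : ℂ) ^ (-s)‖ := by
              simp [norm_mul, norm_pow]
          _ ≤ K * ‖w‖ ^ n * M := by
              gcongr
          _ = K * M * ‖w‖ ^ n := by ring
    exact Summable.of_norm_bounded
      (((summable_geometric_of_lt_one (norm_nonneg w) hw)).mul_left (K * M)) hbound
  -- positivity facts
  have hdα : 0 < (d : ℝ) * α := by positivity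
  have hDpos : 0 < qbr q α d := qbr_pos hq0 hq1 hα hdR
  set D : ℂ := ((qbr q α d : ℝ) : ℂ) ^ (-s) with hD
  -- key pointwise factorization of f at m*d+a
  have hkey : ∀ (m a : ℕ), a < d → 0 < m * d + a →
      f (m * d + a) = χ a * D *
        ((-1 : ℂ) ^ a * w ^ a *
          ((-1) ^ m * w ^ (d * m) *
            ((qbr q ((d : ℝ) * α) ((m : ℝ) + (a : ℝ) / d) : ℝ) : ℂ) ^ (-s))) := by
    intro m a ha hpos
    have hne : m * d + a ≠ 0 := hpos.ne'
    have hsplitR : qbr q α ((m * d + a : ℕ) : ℝ)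
        = qbr q α d * qbr q ((d : ℝ) * α) ((m : ℝ) + (a : ℝ) / d) := by
      have : ((m * d + a : ℕ) : ℝ) = (d : ℝ) * ((m : ℝ) + (a : ℝ) / d) := by
        push_cast; field_simp
      rw [this, qbr_scale hq0 hq1 hα hdR]
    have hy : 0 < (m : ℝ) + (a : ℝ) / d := by
      rcases Nat.eq_zero_or_pos m with hm | hm
      · subst hm
        have : 0 < a := by omega
        have : (0 : ℝ) < a := by exact_mod_cast this
        positivity
      · have : (1 : ℝ) ≤ (m : ℝ) := by exact_mod_cast hm
        have : (0 : ℝ) ≤ (a : ℝ) / d := by positivity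
        linarith
    have hq2pos : 0 < qbr q ((d : ℝ) * α) ((m : ℝ) + (a : ℝ) / d) :=
      qbr_pos hq0 hq1 hdα hy
    have hcpow : ((qbr q α ((m * d + a : ℕ) : ℝ) : ℝ) : ℂ) ^ (-s)
        = D * ((qbr q ((d : ℝ) * α) ((m : ℝ) + (a : ℝ) / d) : ℝ) : ℂ) ^ (-s) := by
      rw [hsplitR, Complex.ofReal_mul, Complex.mul_cpow_ofReal_nonneg hDpos.le hq2pos.le]
    have hχa : χ ((m * d + a : ℕ) : ℤ) = χ a := by
      have : ((m * d + a : ℕ) : ℤ) = (a : ℤ) + (d : ℤ) * (m : ℕ) := by push_cast; ring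
      rw [this, hχper]
    have hsign : (-1 : ℂ) ^ (m * d + a) = (-1) ^ m * (-1) ^ a := by
      rw [pow_add, pow_mul', Odd.neg_one_pow hd]
    have hw' : w ^ (m * d + a) = w ^ a * w ^ (d * m) := by
      rw [pow_add, mul_comm d m, mul_comm]
    simp only [hf_def, if_neg hne]
    rw [hχa, hsign, hw', hcpow]
    ring
  -- rewrite LHS tsum using f
  have hLHS : (∑' m : ℕ, (-1 : ℂ) ^ (m + 1) * χ (m + 1) * w ^ (m + 1) *
      ((qbr q α ((m : ℝ) + 1) : ℝ) : ℂ) ^ (-s)) = ∑' n : ℕ, f n := by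
    rw [hsum.tsum_eq_zero_add]
    have h0 : f 0 = 0 := by simp [hf_def]
    rw [h0, zero_add]
    apply tsum_congr
    intro m
    simp only [hf_def, Nat.succ_ne_zero, if_false]
    push_cast
    ring
  -- decompose ∑' n, f n over residues mod d
  haveI : NeZero d := ⟨hd0.ne'⟩
  have heq : (fun p : Fin d × ℕ =>
        f (((Equiv.prodComm (Fin d) ℕ).trans (Nat.divModEquiv d).symm) p))
      = fun p : Fin d × ℕ => f (p.2 * d + (p.1 : ℕ)) := by
    funext p
    simp [Nat.divModEquiv]
  have key := ((Equiv.prodComm (Fin d) ℕ).trans (Nat.divModEquiv d).symm).tsum_eq f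
  rw [heq] at key
  have hEquiv : (∑' n : ℕ, f n)
      = ∑' p : Fin d × ℕ, f (p.2 * d + p.1) := key.symm
  have hsumF : Summable (fun p : Fin d × ℕ => f (p.2 * d + p.1)) := by
    rw [← heq]
    exact hsum.comp_injective (Equiv.injective _)
  have hfiber : ∀ a : Fin d, Summable (fun k : ℕ => f (k * d + a)) :=
    fun a => hsumF.prod_factor a
  have hsplit : (∑' n : ℕ, f n) = ∑ a ∈ Finset.range d, ∑' k : ℕ, f (k * d + a) := by
    rw [hEquiv, hsumF.tsum_prod' hfiber, tsum_fintype]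
    exact Fin.sum_univ_eq_sum_range (fun j => ∑' k : ℕ, f (k * d + j)) d
  -- the a = 0 fiber
  have hT0 : (∑' k : ℕ, f (k * d + 0)) = χ 0 * D *
      ∑' m : ℕ, (-1 : ℂ) ^ (m + 1) * w ^ (d * (m + 1)) *
        ((qbr q ((d : ℝ) * α) ((m : ℝ) + 1) : ℝ) : ℂ) ^ (-s) := by
    have hsum0 : Summable (fun k : ℕ => f (k * d + 0)) := hfiber ⟨0, hd0⟩
    rw [show (fun k : ℕ => f (k * d + 0)) = (fun k : ℕ => f (k * d)) from by
      funext k; rw [Nat.add_zero]] at hsum0 ⊢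
    rw [hsum0.tsum_eq_zero_add]
    simp only [Nat.zero_mul]
    have h0 : f 0 = 0 := by simp [hf_def]
    rw [h0, zero_add, ← tsum_mul_left]
    apply tsum_congr
    intro m
    have := hkey (m + 1) 0 hd0 (by positivity)
    rw [Nat.add_zero] at this
    rw [this]
    have : ((m + 1 : ℕ) : ℝ) = (m : ℝ) + 1 := by push_cast; ring
    push_cast [this]
    ring
  -- the a ≥ 1 fibers
  have hTa : ∀ a ∈ Finset.Ico 1 d, (∑' k : ℕ, f (k * d + a))
      = (-1 : ℂ) ^ a * χ a * w ^ a * D *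
        ∑' m : ℕ, (-1 : ℂ) ^ m * w ^ (d * m) *
          ((qbr q ((d : ℝ) * α) ((m : ℝ) + (a : ℝ) / d) : ℝ) : ℂ) ^ (-s) := by
    intro a ha
    rw [Finset.mem_Ico] at ha
    rw [← tsum_mul_left]
    apply tsum_congr
    intro m
    rw [hkey m a ha.2 (by omega)]
    ring
  -- nonvanishing of 1 + q^d
  have hqd : (1 : ℂ) + (q : ℂ) ^ d ≠ 0 := by
    have h : (0 : ℝ) < 1 + q ^ d := by positivity
    have : ((1 + q ^ d : ℝ) : ℂ) ≠ 0 := by exact_mod_cast h.ne'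
    simpa using this
  -- put together
  rw [hLHS, hsplit, Finset.range_eq_Ico, Finset.sum_eq_sum_Ico_succ_bot hd0, hT0,
    Finset.sum_congr rfl hTa]
  unfold ZetaTw
  have h1 : (∑ x ∈ Finset.Ico 1 d, ((-1 : ℂ) ^ x * χ x * w ^ x * D *
        ∑' m : ℕ, (-1 : ℂ) ^ m * w ^ (d * m) *
          ((qbr q ((d : ℝ) * α) ((m : ℝ) + (x : ℝ) / d) : ℝ) : ℂ) ^ (-s)))
      = D * ∑ x ∈ Finset.Ico 1 d, ((-1 : ℂ) ^ x * χ x * w ^ x *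
        ∑' m : ℕ, (-1 : ℂ) ^ m * w ^ (d * m) *
          ((qbr q ((d : ℝ) * α) ((m : ℝ) + (x : ℝ) / d) : ℝ) : ℂ) ^ (-s)) := by
    rw [Finset.mul_sum]
    exact Finset.sum_congr rfl fun a _ => by ring
  have h2 : (∑ a ∈ Finset.Ico 1 d, ((-1 : ℂ) ^ a * χ a * w ^ a *
        ((1 + (q : ℂ) ^ d) * ∑' m : ℕ, (-1 : ℂ) ^ m * w ^ (d * m) *
          ((qbr q ((d : ℝ) * α) ((m : ℝ) + (a : ℝ) / d) : ℝ) : ℂ) ^ (-s))))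
      = (1 + (q : ℂ) ^ d) * ∑ a ∈ Finset.Ico 1 d, ((-1 : ℂ) ^ a * χ a * w ^ a *
        ∑' m : ℕ, (-1 : ℂ) ^ m * w ^ (d * m) *
          ((qbr q ((d : ℝ) * α) ((m : ℝ) + (a : ℝ) / d) : ℝ) : ℂ) ^ (-s)) := by
    rw [Finset.mul_sum]
    exact Finset.sum_congr rfl fun a _ => by ring
  rw [h1, h2]
  field_simp
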